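/- Let (Ω, F, μ) be a charge space and f, g simple integrable functions with |f| ≤ M, |g| ≤ M, and μ_f(δ) ≤ C, μ_g(δ) ≤ C for some δ ≥ 0, C > 0, M > 0. Then for any 0 < r < ∞ and ε > 0, if additionally ∫_{{|f|>δ}∪{|g|>δ}} ||f|−|g|| dμ ≤ ε, then ∫_δ^∞ |μ_f(t)^r − μ_g(t)^r| dt ≤ C^r · λ({t ∈ (δ, M] : |μ_f(t) − μ_g(t)| > α}) + ε' · M for appropriate α, ε' depending on ε, where λ({t > δ : |μ_f(t) − μ_g(t)| > α}) ≤ ε/α by Chebyshev. In particular, as ε → 0 the quantity ∫_δ^∞ |μ_f(t)^r − μ_g(t)^r| dt → 0 uniformly over such pairs (f,g). -/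

import Mathlib

open Set ENNReal MeasureTheory

def IsSetField {Ω : Type*} (𝓕 : Set (Set Ω)) : Prop :=
  Set.univ ∈ 𝓕 ∧ (∀ A B : Set Ω, A ∈ 𝓕 → B ∈ 𝓕 → A ∪ B ∈ 𝓕) ∧
    (∀ A B : Set Ω, A ∈ 𝓕 → B ∈ 𝓕 → A \ B ∈ 𝓕)

def IsCharge {Ω : Type*} (𝓕 : Set (Set Ω)) (μ : Set Ω → ℝ≥0∞) : Prop :=
  μ ∅ = 0 ∧ ∀ A B : Set Ω, A ∈ 𝓕 → B ∈ 𝓕 → Disjoint A B → μ (A ∪ B) = μ A + μ B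

noncomputable def outerCharge {Ω : Type*} (𝓕 : Set (Set Ω)) (μ : Set Ω → ℝ≥0∞)
    (E : Set Ω) : ℝ≥0∞ :=
  ⨅ (F : Set Ω) (_ : F ∈ 𝓕) (_ : E ⊆ F), μ F

/-- `f` is a simple integrable function: finitely many values, each nonzero value
taken on a set of the field of finite charge. -/
def IsSimpleInt {Ω : Type*} (𝓕 : Set (Set Ω)) (μ : Set Ω → ℝ≥0∞) (f : Ω → ℝ) : Prop :=
  (Set.range f).Finite ∧ ∀ c : ℝ, c ≠ 0 → {ω | f ω = c} ∈ 𝓕 ∧ μ {ω | f ω = c} ≠ ∞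

/-- The charge integral of a nonnegative simple function,
`∫ f dμ = ∑_c c · μ({f = c})`. -/
noncomputable def chargeIntegral {Ω : Type*} (μ : Set Ω → ℝ≥0∞) (f : Ω → ℝ) : ℝ≥0∞ :=
  ∑' c : ℝ, ENNReal.ofReal c * μ {ω | f ω = c}

/-- The absolute difference in `ℝ≥0∞`. -/
noncomputable def absd (a b : ℝ≥0∞) : ℝ≥0∞ := (a - b) ⊔ (b - a)

section Basics
variable {Ω : Type*} {𝓕 : Set (Set Ω)} {μ : Set Ω → ℝ≥0∞}

lemma empty_mem' (hF : IsSetField 𝓕) : ∅ ∈ 𝓕 := by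
  have := hF.2.2 _ _ hF.1 hF.1
  simpa using this

lemma inter_mem' (hF : IsSetField 𝓕) {A B : Set Ω} (hA : A ∈ 𝓕) (hB : B ∈ 𝓕) :
    A ∩ B ∈ 𝓕 := by
  have := hF.2.2 _ _ hA (hF.2.2 _ _ hA hB)
  simpa [Set.diff_diff_right, Set.inter_comm] using this

lemma charge_mono' (hF : IsSetField 𝓕) (hμ : IsCharge 𝓕 μ) {A B : Set Ω}
    (hA : A ∈ 𝓕) (hB : B ∈ 𝓕) (hAB : A ⊆ B) : μ A ≤ μ B := by
  have h1 : μ B = μ A + μ (B \ A) := by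
    rw [← hμ.2 A (B \ A) hA (hF.2.2 _ _ hB hA) disjoint_sdiff_right]
    rw [Set.union_diff_cancel hAB]
  rw [h1]; exact le_self_add

lemma charge_union_le (hF : IsSetField 𝓕) (hμ : IsCharge 𝓕 μ) {A B : Set Ω}
    (hA : A ∈ 𝓕) (hB : B ∈ 𝓕) : μ (A ∪ B) ≤ μ A + μ B := by
  have h1 : μ (A ∪ B) = μ A + μ (B \ A) := by
    rw [← hμ.2 A (B \ A) hA (hF.2.2 _ _ hB hA) disjoint_sdiff_right, Set.union_diff_self]
  rw [h1]
  exact add_le_add le_rfl (charge_mono' hF hμ (hF.2.2 _ _ hB hA) hB Set.diff_subset)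

lemma biUnion_mem' (hF : IsSetField 𝓕) {ι : Type*} (s : Finset ι) (A : ι → Set Ω)
    (hA : ∀ i ∈ s, A i ∈ 𝓕) : (⋃ i ∈ s, A i) ∈ 𝓕 := by
  classical
  induction s using Finset.induction_on with
  | empty => simpa using empty_mem' hF
  | insert a t hx ih =>
    rw [Finset.set_biUnion_insert]
    exact hF.2.1 _ _ (hA a (Finset.mem_insert_self a t))
      (ih fun i hi => hA i (Finset.mem_insert_of_mem hi))

lemma charge_biUnion (hF : IsSetField 𝓕) (hμ : IsCharge 𝓕 μ) {ι : Type*} (s : Finset ι)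
    (A : ι → Set Ω) (hA : ∀ i ∈ s, A i ∈ 𝓕)
    (hd : ∀ i ∈ s, ∀ j ∈ s, i ≠ j → Disjoint (A i) (A j)) :
    μ (⋃ i ∈ s, A i) = ∑ i ∈ s, μ (A i) := by
  classical
  induction s using Finset.induction_on with
  | empty => simpa using hμ.1
  | insert a t hx ih =>
    rw [Finset.set_biUnion_insert, Finset.sum_insert hx]
    rw [hμ.2 _ _ (hA a (Finset.mem_insert_self a t))
      (biUnion_mem' hF t A fun i hi => hA i (Finset.mem_insert_of_mem hi))
      (Set.disjoint_iUnion₂_right.2 fun i hi =>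
        hd a (Finset.mem_insert_self a t) i (Finset.mem_insert_of_mem hi)
          (fun h => hx (h ▸ hi)))]
    rw [ih (fun i hi => hA i (Finset.mem_insert_of_mem hi))
      (fun i hi j hj hij => hd i (Finset.mem_insert_of_mem hi) j (Finset.mem_insert_of_mem hj) hij)]

lemma outerCharge_le' {E F : Set Ω} (hFm : F ∈ 𝓕) (hEF : E ⊆ F) :
    outerCharge 𝓕 μ E ≤ μ F := by
  exact iInf₂_le_of_le F hFm (iInf_le_of_le hEF le_rfl)

lemma outerCharge_eq' (hF : IsSetField 𝓕) (hμ : IsCharge 𝓕 μ) {A : Set Ω} (hA : A ∈ 𝓕) :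
    outerCharge 𝓕 μ A = μ A := by
  refine le_antisymm (outerCharge_le' hA subset_rfl) ?_
  refine le_iInf₂ fun F hFm => le_iInf fun hAF => charge_mono' hF hμ hA hFm hAF

lemma outerCharge_mono' {E E' : Set Ω} (h : E ⊆ E') :
    outerCharge 𝓕 μ E ≤ outerCharge 𝓕 μ E' := by
  exact le_iInf₂ fun F hFm => le_iInf fun hE'F => outerCharge_le' hFm (h.trans hE'F)

lemma outerCharge_empty' (hF : IsSetField 𝓕) (hμ : IsCharge 𝓕 μ) :
    outerCharge 𝓕 μ (∅ : Set Ω) = 0 := by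
  rw [outerCharge_eq' hF hμ (empty_mem' hF), hμ.1]

end Basics
lemma absd_le_of_le {a b K : ℝ≥0∞} (ha : a ≤ K) (hb : b ≤ K) : absd a b ≤ K :=
  sup_le (le_trans tsub_le_self ha) (le_trans tsub_le_self hb)

lemma absd_add_left {a b : ℝ≥0∞} (c : ℝ≥0∞) (hc : c ≠ ∞) :
    absd (c + a) (c + b) = absd a b := by
  unfold absd
  rw [tsub_add_eq_tsub_tsub, ENNReal.add_sub_cancel_left hc,
    tsub_add_eq_tsub_tsub, ENNReal.add_sub_cancel_left hc]

lemma absd_le_add {a b : ℝ≥0∞} : absd a b ≤ a + b :=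
  sup_le (le_trans tsub_le_self le_self_add) (le_trans tsub_le_self le_add_self)

lemma absd_ofReal {x y : ℝ} (hx : 0 ≤ x) (hy : 0 ≤ y) :
    absd (ENNReal.ofReal x) (ENNReal.ofReal y) = ENNReal.ofReal |x - y| := by
  unfold absd
  rw [← ENNReal.ofReal_sub x hy, ← ENNReal.ofReal_sub y hx,
    ← Monotone.map_max (fun _ _ h => ENNReal.ofReal_le_ofReal h), abs_eq_max_neg, neg_sub]

lemma absd_toReal {a b : ℝ≥0∞} (ha : a ≠ ∞) (hb : b ≠ ∞) :
    absd a b = ENNReal.ofReal |a.toReal - b.toReal| := by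
  rw [← absd_ofReal ENNReal.toReal_nonneg ENNReal.toReal_nonneg,
    ENNReal.ofReal_toReal ha, ENNReal.ofReal_toReal hb]

section Level
variable {Ω : Type*} {𝓕 : Set (Set Ω)} {μ : Set Ω → ℝ≥0∞} {f : Ω → ℝ}

lemma absLevel_mem (hF : IsSetField 𝓕) (hf : IsSimpleInt 𝓕 μ f) (a : ℝ) :
    {ω | |f ω| = a} ∈ 𝓕 := by
  classical
  rcases lt_trichotomy a 0 with h | h | h
  · have he : {ω | |f ω| = a} = ∅ := by
      ext ω; simp only [Set.mem_setOf_eq, Set.mem_empty_iff_false, iff_false]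
      intro hh; exact absurd (hh ▸ abs_nonneg (f ω)) (not_le.2 h)
    rw [he]; exact empty_mem' hF
  · subst h
    have he : {ω | |f ω| = 0} = Set.univ \ ⋃ c ∈ hf.1.toFinset.erase 0, {ω | f ω = c} := by
      ext ω
      simp only [Set.mem_setOf_eq, abs_eq_zero, Set.mem_diff, Set.mem_univ, true_and,
        Set.mem_iUnion, not_exists, Finset.mem_erase, Set.Finite.mem_toFinset]
      constructor
      · rintro h c ⟨hc0, _⟩ hfc; exact hc0 (by rw [← hfc, h])
      · intro h
        by_contra hne
        exact h (f ω) ⟨hne, Set.mem_range_self ω⟩ rfl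
    rw [he]
    exact hF.2.2 _ _ hF.1 (biUnion_mem' hF _ _ fun c hc =>
      (hf.2 c (Finset.mem_erase.1 hc).1).1)
  · have he : {ω | |f ω| = a} = {ω | f ω = a} ∪ {ω | f ω = -a} := by
      ext ω
      simp only [Set.mem_setOf_eq, Set.mem_union]
      exact abs_eq h.le
    rw [he]
    exact hF.2.1 _ _ (hf.2 a h.ne').1 (hf.2 (-a) (neg_ne_zero.2 h.ne')).1

lemma absLevel_fin (hF : IsSetField 𝓕) (hμ : IsCharge 𝓕 μ) (hf : IsSimpleInt 𝓕 μ f)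
    {a : ℝ} (ha : a ≠ 0) : μ {ω | |f ω| = a} ≠ ∞ := by
  rcases lt_trichotomy a 0 with h | h | h
  · have he : {ω | |f ω| = a} = ∅ := by
      ext ω; simp only [Set.mem_setOf_eq, Set.mem_empty_iff_false, iff_false]
      intro hh; exact absurd (hh ▸ abs_nonneg (f ω)) (not_le.2 h)
    rw [he, hμ.1]; exact ENNReal.zero_ne_top
  · exact absurd h ha
  · have he : {ω | |f ω| = a} = {ω | f ω = a} ∪ {ω | f ω = -a} := by
      ext ω
      simp only [Set.mem_setOf_eq, Set.mem_union]
      exact abs_eq h.le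
    rw [he]
    intro htop
    have := charge_union_le hF hμ (hf.2 a h.ne').1 (hf.2 (-a) (neg_ne_zero.2 h.ne')).1
    rw [htop] at this
    exact ENNReal.add_ne_top.2 ⟨(hf.2 a h.ne').2, (hf.2 (-a) (neg_ne_zero.2 h.ne')).2⟩
      (top_le_iff.1 this)

end Level

section Corollary
variable {Ω : Type*} {𝓕 : Set (Set Ω)} {μ : Set Ω → ℝ≥0∞}

lemma distribution_diff_le (hF : IsSetField 𝓕) (hμ : IsCharge 𝓕 μ) {f g : Ω → ℝ}
    (hf : IsSimpleInt 𝓕 μ f) (hg : IsSimpleInt 𝓕 μ g) {δ : ℝ} (hδ : 0 ≤ δ) :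
    ∫⁻ t in Set.Ioi δ,
        absd (outerCharge 𝓕 μ {ω | t < |f ω|}) (outerCharge 𝓕 μ {ω | t < |g ω|})
      ≤ chargeIntegral μ (Set.indicator ({ω | δ < |f ω|} ∪ {ω | δ < |g ω|})
          (fun ω => |(|f ω| - |g ω|)|)) := by
  classical
  set P : Finset (ℝ × ℝ) :=
    (hf.1.toFinset.image fun x => |x|) ×ˢ (hg.1.toFinset.image fun x => |x|) with hP
  set A : ℝ × ℝ → Set Ω := fun q => {ω | |f ω| = q.1} ∩ {ω | |g ω| = q.2} with hA
  have hmemP : ∀ ω, (|f ω|, |g ω|) ∈ P := by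
    intro ω
    refine Finset.mem_product.2 ⟨?_, ?_⟩ <;>
      exact Finset.mem_image.2 ⟨_, Set.Finite.mem_toFinset _ |>.2 (Set.mem_range_self ω), rfl⟩
  have hAmem : ∀ q : ℝ × ℝ, A q ∈ 𝓕 := fun q =>
    inter_mem' hF (absLevel_mem hF hf q.1) (absLevel_mem hF hg q.2)
  have hAfin : ∀ q : ℝ × ℝ, q.1 ≠ 0 → μ (A q) ≠ ∞ := by
    intro q hq1 htop
    have h1 := charge_mono' hF hμ (hAmem q) (absLevel_mem hF hf q.1)
      (Set.inter_subset_left)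
    rw [htop, top_le_iff] at h1
    exact absLevel_fin hF hμ hf hq1 h1
  have hdisj : ∀ q q' : ℝ × ℝ, q ≠ q' → Disjoint (A q) (A q') := by
    intro q q' hne
    refine Set.disjoint_left.2 fun ω hω hω' => hne ?_
    obtain ⟨h1, h2⟩ := hω; obtain ⟨h1', h2'⟩ := hω'
    exact Prod.ext (h1 ▸ h1'.symm ▸ rfl) (h2 ▸ h2'.symm ▸ rfl)
  set Pδ : Finset (ℝ × ℝ) := P.filter fun q => δ < max q.1 q.2 with hPδ
  -- pointwise bound
  have L1 : ∀ t ∈ Set.Ioi δ,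
      absd (outerCharge 𝓕 μ {ω | t < |f ω|}) (outerCharge 𝓕 μ {ω | t < |g ω|})
        ≤ ∑ q ∈ Pδ,
            Set.indicator (Set.Ico (min q.1 q.2) (max q.1 q.2)) (fun _ => μ (A q)) t := by
    intro t ht
    have ht0 : 0 < t := lt_of_le_of_lt hδ ht
    have hfset : {ω | t < |f ω|} = ⋃ q ∈ P.filter fun q => t < q.1, A q := by
      ext ω
      simp only [Set.mem_setOf_eq, Set.mem_iUnion, Finset.mem_filter, exists_prop]
      constructor
      · intro h
        exact ⟨(|f ω|, |g ω|), ⟨hmemP ω, h⟩, ⟨rfl, rfl⟩⟩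
      · rintro ⟨q, ⟨_, hq⟩, h1, _⟩
        exact h1 ▸ hq
    have hgset : {ω | t < |g ω|} = ⋃ q ∈ P.filter fun q => t < q.2, A q := by
      ext ω
      simp only [Set.mem_setOf_eq, Set.mem_iUnion, Finset.mem_filter, exists_prop]
      constructor
      · intro h
        exact ⟨(|f ω|, |g ω|), ⟨hmemP ω, h⟩, ⟨rfl, rfl⟩⟩
      · rintro ⟨q, ⟨_, hq⟩, _, h2⟩
        exact h2 ▸ hq
    have hsum : ∀ s : Finset (ℝ × ℝ), (∀ q ∈ s, q ∈ P) →
        μ (⋃ q ∈ s, A q) = ∑ q ∈ s, μ (A q) := fun s hs =>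
      charge_biUnion hF hμ s A (fun q _ => hAmem q) fun q _ q' _ h => hdisj q q' h
    have hνf : outerCharge 𝓕 μ {ω | t < |f ω|} = ∑ q ∈ P.filter (fun q => t < q.1), μ (A q) := by
      rw [hfset, outerCharge_eq' hF hμ (biUnion_mem' hF _ _ fun q _ => hAmem q)]
      exact hsum _ fun q hq => (Finset.mem_filter.1 hq).1
    have hνg : outerCharge 𝓕 μ {ω | t < |g ω|} = ∑ q ∈ P.filter (fun q => t < q.2), μ (A q) := by
      rw [hgset, outerCharge_eq' hF hμ (biUnion_mem' hF _ _ fun q _ => hAmem q)]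
      exact hsum _ fun q hq => (Finset.mem_filter.1 hq).1
    set u : ℝ≥0∞ := ∑ q ∈ P.filter (fun q => t < q.1 ∧ t < q.2), μ (A q) with hu
    set x : ℝ≥0∞ := ∑ q ∈ P.filter (fun q => t < q.1 ∧ ¬ t < q.2), μ (A q) with hx
    set y : ℝ≥0∞ := ∑ q ∈ P.filter (fun q => ¬ t < q.1 ∧ t < q.2), μ (A q) with hy
    have hsplitf : ∑ q ∈ P.filter (fun q => t < q.1), μ (A q) = u + x := by
      rw [hu, hx, ← Finset.sum_filter_add_sum_filter_not (P.filter fun q => t < q.1)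
        (fun q => t < q.2)]
      rw [Finset.filter_filter, Finset.filter_filter]
    have hsplitg : ∑ q ∈ P.filter (fun q => t < q.2), μ (A q) = u + y := by
      rw [hu, hy, ← Finset.sum_filter_add_sum_filter_not (P.filter fun q => t < q.2)
        (fun q => t < q.1)]
      rw [Finset.filter_filter, Finset.filter_filter]
      congr 1
      · apply Finset.sum_congr _ fun _ _ => rfl
        apply Finset.filter_congr
        intro q _
        exact and_comm
      · apply Finset.sum_congr _ fun _ _ => rfl
        apply Finset.filter_congr
        intro q _
        simp only [and_comm]
    have hufin : u ≠ ∞ := by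
      rw [hu]
      refine (ENNReal.sum_lt_top.2 fun q hq => ?_).ne
      have := (Finset.mem_filter.1 hq).2.1
      exact lt_top_iff_ne_top.2 (hAfin q (ne_of_gt (lt_trans ht0 this)))
    have key : absd (outerCharge 𝓕 μ {ω | t < |f ω|}) (outerCharge 𝓕 μ {ω | t < |g ω|})
        ≤ x + y := by
      rw [hνf, hνg, hsplitf, hsplitg, absd_add_left u hufin]
      exact absd_le_add
    refine key.trans ?_
    have hxy : x + y = ∑ q ∈ (P.filter fun q => t < q.1 ∧ ¬ t < q.2) ∪
        (P.filter fun q => ¬ t < q.1 ∧ t < q.2), μ (A q) := by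
      rw [Finset.sum_union (Finset.disjoint_left.2 fun q hq1 hq2 =>
        (Finset.mem_filter.1 hq2).2.1 (Finset.mem_filter.1 hq1).2.1)]
    rw [hxy]
    have hsub : (P.filter fun q => t < q.1 ∧ ¬ t < q.2) ∪
        (P.filter fun q => ¬ t < q.1 ∧ t < q.2) ⊆ Pδ := by
      intro q hq
      rcases Finset.mem_union.1 hq with h | h
      · obtain ⟨hqP, h1, _⟩ := Finset.mem_filter.1 h
        exact Finset.mem_filter.2 ⟨hqP, ht.trans (h1.trans_le (le_max_left _ _))⟩
      · obtain ⟨hqP, _, h2⟩ := Finset.mem_filter.1 h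
        exact Finset.mem_filter.2 ⟨hqP, ht.trans (h2.trans_le (le_max_right _ _))⟩
    calc ∑ q ∈ (P.filter fun q => t < q.1 ∧ ¬ t < q.2) ∪
            (P.filter fun q => ¬ t < q.1 ∧ t < q.2), μ (A q)
        = ∑ q ∈ (P.filter fun q => t < q.1 ∧ ¬ t < q.2) ∪
            (P.filter fun q => ¬ t < q.1 ∧ t < q.2),
            Set.indicator (Set.Ico (min q.1 q.2) (max q.1 q.2)) (fun _ => μ (A q)) t := by
          refine Finset.sum_congr rfl fun q hq => ?_
          rcases Finset.mem_union.1 hq with h | h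
          · obtain ⟨_, h1, h2⟩ := Finset.mem_filter.1 h
            have hmem : t ∈ Set.Ico (min q.1 q.2) (max q.1 q.2) :=
              ⟨(min_le_right _ _).trans (not_lt.1 h2), h1.trans_le (le_max_left _ _)⟩
            exact (Set.indicator_of_mem hmem (fun _ => μ (A q))).symm
          · obtain ⟨_, h1, h2⟩ := Finset.mem_filter.1 h
            have hmem : t ∈ Set.Ico (min q.1 q.2) (max q.1 q.2) :=
              ⟨(min_le_left _ _).trans (not_lt.1 h1), h2.trans_le (le_max_right _ _)⟩
            exact (Set.indicator_of_mem hmem (fun _ => μ (A q))).symm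
      _ ≤ ∑ q ∈ Pδ, Set.indicator (Set.Ico (min q.1 q.2) (max q.1 q.2)) (fun _ => μ (A q)) t :=
          Finset.sum_le_sum_of_subset hsub
  -- integral bound
  have L2 : ∫⁻ t in Set.Ioi δ,
      absd (outerCharge 𝓕 μ {ω | t < |f ω|}) (outerCharge 𝓕 μ {ω | t < |g ω|})
        ≤ ∑ q ∈ Pδ, ENNReal.ofReal |q.1 - q.2| * μ (A q) := by
    refine (setLIntegral_mono' measurableSet_Ioi L1).trans ?_
    rw [lintegral_finset_sum' _ fun q _ =>
      (measurable_const.indicator measurableSet_Ico).aemeasurable]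
    refine Finset.sum_le_sum fun q hq => ?_
    calc ∫⁻ t in Set.Ioi δ,
          Set.indicator (Set.Ico (min q.1 q.2) (max q.1 q.2)) (fun _ => μ (A q)) t
        ≤ ∫⁻ t, Set.indicator (Set.Ico (min q.1 q.2) (max q.1 q.2)) (fun _ => μ (A q)) t :=
          setLIntegral_le_lintegral _ _
      _ = μ (A q) * volume (Set.Ico (min q.1 q.2) (max q.1 q.2)) :=
          lintegral_indicator_const measurableSet_Ico _
      _ = ENNReal.ofReal |q.1 - q.2| * μ (A q) := by
          rw [Real.volume_Ico, max_sub_min_eq_abs, abs_sub_comm, mul_comm]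
  -- RHS bound
  have R : ∑ q ∈ Pδ, ENNReal.ofReal |q.1 - q.2| * μ (A q)
      ≤ chargeIntegral μ (Set.indicator ({ω | δ < |f ω|} ∪ {ω | δ < |g ω|})
          (fun ω => |(|f ω| - |g ω|)|)) := by
    set E : Set Ω := {ω | δ < |f ω|} ∪ {ω | δ < |g ω|} with hE
    set h : Ω → ℝ := fun ω => |(|f ω| - |g ω|)| with hh
    set W : Finset ℝ := Pδ.image fun q => |q.1 - q.2| with hW
    have hkey : ∀ c : ℝ, c ≠ 0 →
        {ω | Set.indicator E h ω = c} = ⋃ q ∈ Pδ.filter fun q => |q.1 - q.2| = c, A q := by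
      intro c hc
      ext ω
      simp only [Set.mem_setOf_eq, Set.mem_iUnion, Finset.mem_filter, exists_prop]
      constructor
      · intro hωc
        have hωE : ω ∈ E := by
          by_contra hne
          rw [Set.indicator_of_notMem hne] at hωc; exact hc hωc.symm
        have hδmax : δ < max |f ω| |g ω| := by
          rcases hωE with h1 | h1
          exacts [lt_max_iff.2 (Or.inl h1), lt_max_iff.2 (Or.inr h1)]
        rw [Set.indicator_of_mem hωE] at hωc
        exact ⟨(|f ω|, |g ω|), ⟨Finset.mem_filter.2 ⟨hmemP ω, hδmax⟩, hωc⟩, rfl, rfl⟩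
      · rintro ⟨q, ⟨hqPδ, hqc⟩, h1, h2⟩
        obtain ⟨hqP, hqδ⟩ := Finset.mem_filter.1 hqPδ
        have hωE : ω ∈ E := by
          rcases lt_max_iff.1 hqδ with hlt | hlt
          · exact Or.inl (show δ < |f ω| by rw [h1]; exact hlt)
          · exact Or.inr (show δ < |g ω| by rw [h2]; exact hlt)
        rw [Set.indicator_of_mem hωE]
        show |(|f ω| - |g ω|)| = c
        rw [h1, h2]; exact hqc
    unfold chargeIntegral
    refine le_trans ?_ (ENNReal.sum_le_tsum W)
    rw [← Finset.sum_fiberwise_of_maps_to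
      (fun q hq => Finset.mem_image_of_mem (fun q => |q.1 - q.2|) hq)
      (fun q => ENNReal.ofReal |q.1 - q.2| * μ (A q))]
    refine Finset.sum_le_sum fun c hcW => ?_
    by_cases hc : c = 0
    · subst hc
      rw [Finset.sum_eq_zero fun q hq => by rw [(Finset.mem_filter.1 hq).2]; simp]
      exact zero_le
    · rw [hkey c hc, charge_biUnion hF hμ _ _ (fun q _ => hAmem q)
        (fun q _ q' _ hne => hdisj q q' hne), Finset.mul_sum]
      refine le_of_eq (Finset.sum_congr rfl fun q hq => ?_)
      rw [(Finset.mem_filter.1 hq).2]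
  exact L2.trans R

end Corollary

lemma rpow_unif {r C : ℝ} (hr : 0 < r) {ε : ℝ} (hε : 0 < ε) :
    ∃ α > 0, ∀ x y : ℝ, x ∈ Set.Icc 0 C → y ∈ Set.Icc 0 C → |x - y| ≤ α →
      |x ^ r - y ^ r| ≤ ε := by
  have hcont : ContinuousOn (fun x : ℝ => x ^ r) (Set.Icc 0 C) := fun x _ =>
    (Real.continuousAt_rpow_const x r (Or.inr hr.le)).continuousWithinAt
  have huc := (isCompact_Icc).uniformContinuousOn_of_continuous hcont
  obtain ⟨α, hα, hαh⟩ := Metric.uniformContinuousOn_iff_le.1 huc ε hε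
  exact ⟨α, hα, fun x y hx hy hxy => by
    simpa [Real.dist_eq] using hαh x hx y hy (by simpa [Real.dist_eq] using hxy)⟩

lemma absd_rpow_le {r C α ε : ℝ} (hr : 0 < r) (hC : 0 ≤ C) (hα : 0 ≤ α)
    (hunif : ∀ x y : ℝ, x ∈ Set.Icc 0 C → y ∈ Set.Icc 0 C → |x - y| ≤ α →
      |x ^ r - y ^ r| ≤ ε)
    {a b : ℝ≥0∞} (ha : a ≤ ENNReal.ofReal C) (hb : b ≤ ENNReal.ofReal C)
    (hd : absd a b ≤ ENNReal.ofReal α) : absd (a ^ r) (b ^ r) ≤ ENNReal.ofReal ε := by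
  have hat : a ≠ ∞ := (ha.trans_lt ENNReal.ofReal_lt_top).ne
  have hbt : b ≠ ∞ := (hb.trans_lt ENNReal.ofReal_lt_top).ne
  set x := a.toReal with hx
  set y := b.toReal with hy
  have hxI : x ∈ Set.Icc 0 C := ⟨ENNReal.toReal_nonneg, ENNReal.toReal_le_of_le_ofReal hC ha⟩
  have hyI : y ∈ Set.Icc 0 C := ⟨ENNReal.toReal_nonneg, ENNReal.toReal_le_of_le_ofReal hC hb⟩
  have hxy : |x - y| ≤ α := by
    rw [absd_toReal hat hbt] at hd
    exact (ENNReal.ofReal_le_ofReal_iff hα).1 hd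
  have har : a ^ r = ENNReal.ofReal (x ^ r) := by
    rw [← ENNReal.ofReal_toReal hat, ENNReal.ofReal_rpow_of_nonneg ENNReal.toReal_nonneg hr.le]
  have hbr : b ^ r = ENNReal.ofReal (y ^ r) := by
    rw [← ENNReal.ofReal_toReal hbt, ENNReal.ofReal_rpow_of_nonneg ENNReal.toReal_nonneg hr.le]
  rw [har, hbr, absd_ofReal (Real.rpow_nonneg hxI.1 r) (Real.rpow_nonneg hyI.1 r)]
  exact ENNReal.ofReal_le_ofReal (hunif x y hxI hyI hxy)


/-- Uniform vanishing: `∫_δ^∞ |μ_f(t)^r − μ_g(t)^r| dt → 0` uniformly over pairs of simple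
integrable functions bounded by `M`, with `μ_f(δ), μ_g(δ) ≤ C`, as
`∫_{{|f|>δ}∪{|g|>δ}} ||f|−|g|| dμ → 0`. -/
theorem lintegral_rpow_distribution_uniform_small {Ω : Type*} (𝓕 : Set (Set Ω))
    (μ : Set Ω → ℝ≥0∞) (hF : IsSetField 𝓕) (hμ : IsCharge 𝓕 μ)
    (r M C δ : ℝ) (hr : 0 < r) (hM : 0 < M) (hC : 0 < C) (hδ : 0 ≤ δ) :
    ∀ ε' : ℝ, 0 < ε' → ∃ ε : ℝ, 0 < ε ∧
      ∀ f g : Ω → ℝ, IsSimpleInt 𝓕 μ f → IsSimpleInt 𝓕 μ g →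
        (∀ ω, |f ω| ≤ M) → (∀ ω, |g ω| ≤ M) →
        outerCharge 𝓕 μ {ω | δ < |f ω|} ≤ ENNReal.ofReal C →
        outerCharge 𝓕 μ {ω | δ < |g ω|} ≤ ENNReal.ofReal C →
        chargeIntegral μ
            (Set.indicator ({ω | δ < |f ω|} ∪ {ω | δ < |g ω|})
              (fun ω => |(|f ω| - |g ω|)|)) ≤ ENNReal.ofReal ε →
        ∫⁻ t in Set.Ioi δ,
            absd ((outerCharge 𝓕 μ {ω | t < |f ω|}) ^ r)
                 ((outerCharge 𝓕 μ {ω | t < |g ω|}) ^ r)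
          ≤ ENNReal.ofReal ε' := by
  intro ε' hε'
  have hε'' : 0 < ε' / (2 * M) := by positivity
  obtain ⟨α, hα, hunif⟩ := rpow_unif (C := C) hr hε''
  have hCr : 0 < C ^ r := Real.rpow_pos_of_pos hC r
  refine ⟨ε' * α / (2 * C ^ r), by positivity, ?_⟩
  intro f g hf hg hfM hgM hfC hgC hint
  set νf : ℝ → ℝ≥0∞ := fun t => outerCharge 𝓕 μ {ω | t < |f ω|} with hνf
  set νg : ℝ → ℝ≥0∞ := fun t => outerCharge 𝓕 μ {ω | t < |g ω|} with hνg
  have h1 : ∫⁻ t in Set.Ioi δ, absd (νf t) (νg t) ≤ ENNReal.ofReal (ε' * α / (2 * C ^ r)) :=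
    (distribution_diff_le hF hμ hf hg hδ).trans hint
  have hmf : Measurable νf := Antitone.measurable fun s t hst =>
    outerCharge_mono' fun ω h => lt_of_le_of_lt hst h
  have hmg : Measurable νg := Antitone.measurable fun s t hst =>
    outerCharge_mono' fun ω h => lt_of_le_of_lt hst h
  have hm : Measurable fun t => absd (νf t) (νg t) := (hmf.sub hmg).sup (hmg.sub hmf)
  set S : Set ℝ := {t | ENNReal.ofReal α ≤ absd (νf t) (νg t)} with hS
  have hSmeas : MeasurableSet S := measurableSet_le measurable_const hm
  have hαne : ENNReal.ofReal α ≠ 0 := (ENNReal.ofReal_pos.2 hα).ne'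
  have cheb : (volume.restrict (Set.Ioi δ)) S ≤ ENNReal.ofReal (ε' / (2 * C ^ r)) := by
    have h2 := mul_meas_ge_le_lintegral₀ (μ := volume.restrict (Set.Ioi δ))
      hm.aemeasurable (ENNReal.ofReal α)
    have h3 : ENNReal.ofReal α * (volume.restrict (Set.Ioi δ)) S
        ≤ ENNReal.ofReal (ε' * α / (2 * C ^ r)) := h2.trans h1
    rw [mul_comm] at h3
    have h4 := (ENNReal.le_div_iff_mul_le (Or.inl hαne)
      (Or.inl ENNReal.ofReal_ne_top)).2 h3
    refine h4.trans ?_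
    rw [← ENNReal.ofReal_div_of_pos hα]
    refine ENNReal.ofReal_le_ofReal (le_of_eq ?_)
    field_simp
  have hptwise : ∀ t ∈ Set.Ioi δ, absd (νf t ^ r) (νg t ^ r)
      ≤ S.indicator (fun _ => ENNReal.ofReal (C ^ r)) t
        + (Set.Ioc δ M).indicator (fun _ => ENNReal.ofReal (ε' / (2 * M))) t := by
    intro t ht
    by_cases htM : t ≤ M
    · have hνfC : νf t ≤ ENNReal.ofReal C :=
        (outerCharge_mono' (fun ω (h : ω ∈ {ω | t < |f ω|}) =>
          show ω ∈ {ω | δ < |f ω|} from lt_trans (Set.mem_Ioi.1 ht) h)).trans hfC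
      have hνgC : νg t ≤ ENNReal.ofReal C :=
        (outerCharge_mono' (fun ω (h : ω ∈ {ω | t < |g ω|}) =>
          show ω ∈ {ω | δ < |g ω|} from lt_trans (Set.mem_Ioi.1 ht) h)).trans hgC
      by_cases hSt : t ∈ S
      · refine le_trans ?_ (le_add_right (le_of_eq (Set.indicator_of_mem hSt (fun _ => ENNReal.ofReal (C ^ r))).symm))
        have h5 : νf t ^ r ≤ ENNReal.ofReal (C ^ r) := by
          rw [← ENNReal.ofReal_rpow_of_nonneg hC.le hr.le]
          exact ENNReal.rpow_le_rpow hνfC hr.le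
        have h6 : νg t ^ r ≤ ENNReal.ofReal (C ^ r) := by
          rw [← ENNReal.ofReal_rpow_of_nonneg hC.le hr.le]
          exact ENNReal.rpow_le_rpow hνgC hr.le
        exact absd_le_of_le h5 h6
      · refine le_trans ?_ (le_add_left (le_of_eq
          (Set.indicator_of_mem (Set.mem_Ioc.2 ⟨Set.mem_Ioi.1 ht, htM⟩)
            (fun _ => ENNReal.ofReal (ε' / (2 * M)))).symm))
        exact absd_rpow_le hr hC.le hα.le hunif hνfC hνgC (le_of_lt (not_le.1 hSt))
    · have hfe : {ω | t < |f ω|} = ∅ := by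
        ext ω; simp only [Set.mem_setOf_eq, Set.mem_empty_iff_false, iff_false, not_lt]
        exact (hfM ω).trans (not_le.1 htM).le
      have hge : {ω | t < |g ω|} = ∅ := by
        ext ω; simp only [Set.mem_setOf_eq, Set.mem_empty_iff_false, iff_false, not_lt]
        exact (hgM ω).trans (not_le.1 htM).le
      have : νf t = 0 := by rw [hνf]; simp only; rw [hfe, outerCharge_empty' hF hμ]
      have hg0 : νg t = 0 := by rw [hνg]; simp only; rw [hge, outerCharge_empty' hF hμ]
      rw [this, hg0, ENNReal.zero_rpow_of_pos hr]
      simp [absd]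
  calc ∫⁻ t in Set.Ioi δ, absd (νf t ^ r) (νg t ^ r)
      ≤ ∫⁻ t in Set.Ioi δ, (S.indicator (fun _ => ENNReal.ofReal (C ^ r)) t
          + (Set.Ioc δ M).indicator (fun _ => ENNReal.ofReal (ε' / (2 * M))) t) :=
        setLIntegral_mono' measurableSet_Ioi hptwise
    _ = (∫⁻ t in Set.Ioi δ, S.indicator (fun _ => ENNReal.ofReal (C ^ r)) t)
          + ∫⁻ t in Set.Ioi δ, (Set.Ioc δ M).indicator (fun _ => ENNReal.ofReal (ε' / (2 * M))) t :=
        lintegral_add_left (measurable_const.indicator hSmeas) _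
    _ ≤ ENNReal.ofReal (C ^ r) * ENNReal.ofReal (ε' / (2 * C ^ r))
          + ENNReal.ofReal (ε' / (2 * M)) * ENNReal.ofReal M := by
        refine add_le_add ?_ ?_
        · rw [lintegral_indicator_const hSmeas]
          exact mul_le_mul_right cheb _
        · rw [lintegral_indicator_const measurableSet_Ioc]
          refine mul_le_mul_right ?_ _
          refine le_trans (Measure.restrict_apply_le _ _) ?_
          rw [Real.volume_Ioc]
          exact ENNReal.ofReal_le_ofReal (by linarith)
    _ ≤ ENNReal.ofReal ε' := by
        rw [← ENNReal.ofReal_mul (by positivity), ← ENNReal.ofReal_mul (by positivity),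
          ← ENNReal.ofReal_add (by positivity) (by positivity)]
        refine ENNReal.ofReal_le_ofReal (le_of_eq ?_)
        field_simp
        ring
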